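/- For complex numbers a₁, a₂, the condition |a₁|² + |a₂| ≤ 1 holds if and only if the 3×3 Hermitian matrix [[1, c̄₁, c̄₂], [c₁, 1, c̄₁], [c₂, c₁, 1]] is positive semidefinite, where c₁ = a₁ and c₂ = a₂ + a₁². -/

import Mathlib

open scoped ComplexOrder

set_option maxHeartbeats 1600000 in
/-- With `c₁ = a₁` and `c₂ = a₂ + a₁²`, the condition `|a₁|² + |a₂| ≤ 1` holds iff the
Hermitian Toeplitz matrix `[[1, c̄₁, c̄₂], [c₁, 1, c̄₁], [c₂, c₁, 1]]` is positive
semidefinite. -/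
theorem stmt4 (a₁ a₂ : ℂ) (c₁ c₂ : ℂ) (hc₁ : c₁ = a₁) (hc₂ : c₂ = a₂ + a₁ ^ 2) :
    ‖a₁‖ ^ 2 + ‖a₂‖ ≤ 1 ↔
      (!![1, star c₁, star c₂; c₁, 1, star c₁; c₂, c₁, 1] :
        Matrix (Fin 3) (Fin 3) ℂ).PosSemidef := by
  rw [hc₁, hc₂]
  constructor
  · intro h
    have ht : (0:ℝ) ≤ 1 - ‖a₁‖ ^ 2 := by nlinarith [norm_nonneg a₂]
    refine Matrix.PosSemidef.of_dotProduct_mulVec_nonneg ?_ ?_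
    · ext i j
      fin_cases i <;> fin_cases j <;>
        simp [Matrix.conjTranspose_apply]
    · intro x
      simp only [dotProduct, Matrix.mulVec, Fin.sum_univ_three, Matrix.cons_val_zero,
        Matrix.cons_val_one, Matrix.head_cons, Matrix.cons_val_two, Matrix.tail_cons,
        Matrix.of_apply, Pi.star_apply, Complex.star_def]
      set x0 := x 0; set x1 := x 1; set x2 := x 2
      rcases eq_or_lt_of_le ht with h0 | h0
      · -- boundary case: ‖a₁‖ = 1, a₂ = 0
        have ha20 : a₂ = 0 := by
          have : ‖a₂‖ = 0 := le_antisymm (by linarith) (norm_nonneg _)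
          simpa using this
        have h1 : a₁ * (starRingEnd ℂ) a₁ = 1 := by
          have : ((‖a₁‖:ℝ):ℂ) ^ 2 = 1 := by
            norm_cast
            nlinarith [norm_nonneg a₁]
          rw [Complex.mul_conj', this]
        subst ha20
        have key : (starRingEnd ℂ) x0 * (1 * x0 + (starRingEnd ℂ) a₁ * x1 + (starRingEnd ℂ) ((0:ℂ) + a₁ ^ 2) * x2) +
            (starRingEnd ℂ) x1 * (a₁ * x0 + 1 * x1 + (starRingEnd ℂ) a₁ * x2) +
            (starRingEnd ℂ) x2 * (((0:ℂ) + a₁ ^ 2) * x0 + a₁ * x1 + 1 * x2) =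
            star (x0 + (starRingEnd ℂ) a₁ * x1 + (starRingEnd ℂ) (a₁^2) * x2) *
              (x0 + (starRingEnd ℂ) a₁ * x1 + (starRingEnd ℂ) (a₁^2) * x2) := by
          simp only [Complex.star_def, map_add, _root_.map_mul, map_pow, _root_.map_zero,
            Complex.conj_conj]
          linear_combination (-((starRingEnd ℂ) x1 * x1 + (starRingEnd ℂ) a₁ * (starRingEnd ℂ) x1 * x2 + a₁ * (starRingEnd ℂ) x2 * x1 + (1 + a₁ * (starRingEnd ℂ) a₁) * (starRingEnd ℂ) x2 * x2)) * h1
        rw [key]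
        exact star_mul_self_nonneg _
      · -- interior case: 1 - ‖a₁‖² > 0
        set T : ℂ := ((1 - ‖a₁‖ ^ 2 : ℝ) : ℂ) with hT
        set u : ℂ := x0 + (starRingEnd ℂ) a₁ * x1 + (starRingEnd ℂ) (a₂ + a₁^2) * x2 with hu
        set v : ℂ := T * x1 + ((starRingEnd ℂ) a₁ * T - a₁ * (starRingEnd ℂ) a₂) * x2 with hv
        have key : T * ((starRingEnd ℂ) x0 * (1 * x0 + (starRingEnd ℂ) a₁ * x1 + (starRingEnd ℂ) (a₂ + a₁ ^ 2) * x2) +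
            (starRingEnd ℂ) x1 * (a₁ * x0 + 1 * x1 + (starRingEnd ℂ) a₁ * x2) +
            (starRingEnd ℂ) x2 * ((a₂ + a₁ ^ 2) * x0 + a₁ * x1 + 1 * x2)) =
            T * (star u * u) + star v * v +
              (((1 - ‖a₁‖ ^ 2) ^ 2 - ‖a₂‖ ^ 2 : ℝ) : ℂ) * (star x2 * x2) := by
          simp only [hu, hv, hT, Complex.star_def, map_add, _root_.map_mul, map_pow, map_sub,
            _root_.map_one, Complex.conj_conj, Complex.conj_ofReal]
          push_cast
          rw [← Complex.mul_conj' a₁, ← Complex.mul_conj' a₂]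
          ring
        have hTinv : (0:ℂ) ≤ (((1 - ‖a₁‖ ^ 2)⁻¹ : ℝ) : ℂ) :=
          Complex.zero_le_real.mpr (by positivity)
        have hrhs : (0:ℂ) ≤ T * (star u * u) + star v * v +
            (((1 - ‖a₁‖ ^ 2) ^ 2 - ‖a₂‖ ^ 2 : ℝ) : ℂ) * (star x2 * x2) := by
          have h1 : (0:ℂ) ≤ T := Complex.zero_le_real.mpr ht
          have h3 : (0:ℂ) ≤ (((1 - ‖a₁‖ ^ 2) ^ 2 - ‖a₂‖ ^ 2 : ℝ) : ℂ) :=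
            Complex.zero_le_real.mpr (by nlinarith [norm_nonneg a₂])
          exact add_nonneg (add_nonneg (mul_nonneg h1 (star_mul_self_nonneg u))
            (star_mul_self_nonneg v)) (mul_nonneg h3 (star_mul_self_nonneg x2))
        have hTne : (1 - ‖a₁‖ ^ 2 : ℝ) ≠ 0 := by linarith
        calc (0:ℂ) ≤ (((1 - ‖a₁‖ ^ 2)⁻¹ : ℝ) : ℂ) * (T * (star u * u) + star v * v +
              (((1 - ‖a₁‖ ^ 2) ^ 2 - ‖a₂‖ ^ 2 : ℝ) : ℂ) * (star x2 * x2)) :=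
            mul_nonneg hTinv hrhs
          _ = _ := by
            have hone : (((1 - ‖a₁‖ ^ 2)⁻¹ : ℝ) : ℂ) * T = 1 := by
              rw [hT]
              norm_cast
              rw [inv_mul_cancel₀ hTne]
            rw [← key, ← mul_assoc, hone, one_mul]
  · intro h
    -- extract 1 - ‖a₁‖² ≥ 0
    have ht : (0:ℝ) ≤ 1 - ‖a₁‖ ^ 2 := by
      have h2 := h.dotProduct_mulVec_nonneg ![(starRingEnd ℂ) a₁, -1, 0]
      simp only [dotProduct, Matrix.mulVec, Fin.sum_univ_three, Matrix.cons_val_zero,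
        Matrix.cons_val_one, Matrix.head_cons, Matrix.cons_val_two, Matrix.tail_cons,
        Matrix.of_apply, Pi.star_apply, Complex.star_def] at h2
      have e : (starRingEnd ℂ) ((starRingEnd ℂ) a₁) * (1 * (starRingEnd ℂ) a₁ + (starRingEnd ℂ) a₁ * (-1) + (starRingEnd ℂ) (a₂ + a₁ ^ 2) * 0) +
          (starRingEnd ℂ) (-1:ℂ) * (a₁ * (starRingEnd ℂ) a₁ + 1 * (-1) + (starRingEnd ℂ) a₁ * 0) +
          (starRingEnd ℂ) (0:ℂ) * ((a₂ + a₁ ^ 2) * (starRingEnd ℂ) a₁ + a₁ * (-1) + 1 * 0) =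
          ((1 - ‖a₁‖ ^ 2 : ℝ) : ℂ) := by
        simp only [map_neg, _root_.map_one, _root_.map_zero, Complex.conj_conj, _root_.map_mul]
        push_cast
        rw [← Complex.mul_conj' a₁]
        ring
      rw [e] at h2
      exact Complex.zero_le_real.mp h2
    -- determinant nonneg
    have hdet : (0:ℝ) ≤ (1 - ‖a₁‖ ^ 2) ^ 2 - ‖a₂‖ ^ 2 := by
      obtain ⟨B, hB⟩ : ∃ B : Matrix (Fin 3) (Fin 3) ℂ, (!![1, star a₁, star (a₂ + a₁ ^ 2); a₁, 1, star a₁; a₂ + a₁ ^ 2, a₁, 1] :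
          Matrix (Fin 3) (Fin 3) ℂ) = Matrix.conjTranspose B * B := by
        open scoped MatrixOrder Matrix.Norms.L2Operator in
        exact CStarAlgebra.nonneg_iff_eq_star_mul_self.mp h.nonneg
      have hd : (!![1, star a₁, star (a₂ + a₁ ^ 2); a₁, 1, star a₁; a₂ + a₁ ^ 2, a₁, 1] :
          Matrix (Fin 3) (Fin 3) ℂ).det = star B.det * B.det := by
        rw [hB, Matrix.det_mul, Matrix.det_conjTranspose]
      have hd2 : (!![1, star a₁, star (a₂ + a₁ ^ 2); a₁, 1, star a₁; a₂ + a₁ ^ 2, a₁, 1] :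
          Matrix (Fin 3) (Fin 3) ℂ).det = (((1 - ‖a₁‖ ^ 2) ^ 2 - ‖a₂‖ ^ 2 : ℝ) : ℂ) := by
        rw [Matrix.det_fin_three]
        simp only [Matrix.cons_val_zero, Matrix.cons_val_one, Matrix.head_cons,
          Matrix.cons_val_two, Matrix.tail_cons, Matrix.of_apply, Complex.star_def,
          map_add, map_pow]
        push_cast
        rw [← Complex.mul_conj' a₁, ← Complex.mul_conj' a₂]
        ring
      have : (0:ℂ) ≤ (((1 - ‖a₁‖ ^ 2) ^ 2 - ‖a₂‖ ^ 2 : ℝ) : ℂ) := by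
        rw [← hd2, hd]
        exact star_mul_self_nonneg _
      exact Complex.zero_le_real.mp this
    nlinarith [norm_nonneg a₂, norm_nonneg a₁]
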